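/- Let $r, n \in \mathbb{N}$, $\delta \le 1/(2r)$, and let $G$ be a graph on $n$ vertices with $\delta(G) \ge (1-\delta)n$. Let $t < r$ be a positive integer and let $Z \subseteq V(G)$ with $|Z| = t$ induce a complete graph. Then the number $\kappa_Z^{(r)}$ of $r$-cliques of $G$ whose vertex set contains $Z$ satisfies $|\kappa_Z^{(r)} - k_{r-t}| \le 2t\delta r\, k_{r-t}$. -/

import Mathlib

open Finset

set_option linter.unusedSectionVars false
set_option linter.unusedVariables false
set_option maxHeartbeats 1000000

section aux

variable {V : Type*} [Fintype V] [DecidableEq V] (G : SimpleGraph V) [DecidableRel G.Adj]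

lemma aux_nonadj_card {δ : ℝ}
    (hmin : (1-δ) * (Fintype.card V : ℝ) ≤ (G.minDegree : ℝ)) (z : V) :
    (((univ : Finset V).filter (fun v => ¬ G.Adj z v)).card : ℝ)
      ≤ δ * (Fintype.card V : ℝ) := by
  have h1 : ((univ : Finset V).filter (fun v => G.Adj z v)).card = G.degree z := by
    rw [← SimpleGraph.card_neighborFinset_eq_degree]
    congr 1
    ext v; simp [SimpleGraph.mem_neighborFinset]
  have h2 := Finset.card_filter_add_card_filter_not
      (s := (univ : Finset V)) (p := fun v => G.Adj z v)
  rw [card_univ, h1] at h2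
  have h3 : (G.minDegree : ℝ) ≤ (G.degree z : ℝ) := by
    exact_mod_cast G.minDegree_le_degree z
  have h4 : (G.degree z : ℝ) + (((univ : Finset V).filter (fun v => ¬ G.Adj z v)).card : ℝ)
      = (Fintype.card V : ℝ) := by exact_mod_cast h2
  nlinarith [hmin]

lemma aux_bad_card {δ : ℝ}
    (hmin : (1-δ) * (Fintype.card V : ℝ) ≤ (G.minDegree : ℝ)) (S : Finset V) :
    (((univ : Finset V).filter (fun v => ¬ ∀ z ∈ S, G.Adj z v)).card : ℝ)
      ≤ (S.card : ℝ) * (δ * (Fintype.card V : ℝ)) := by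
  have hsub : (univ : Finset V).filter (fun v => ¬ ∀ z ∈ S, G.Adj z v)
      ⊆ S.biUnion (fun z => (univ : Finset V).filter (fun v => ¬ G.Adj z v)) := by
    intro v hv
    simp only [mem_filter, mem_univ, true_and, not_forall] at hv
    obtain ⟨z, hz, hadj⟩ := hv
    exact mem_biUnion.2 ⟨z, hz, by simp [hadj]⟩
  calc (((univ : Finset V).filter (fun v => ¬ ∀ z ∈ S, G.Adj z v)).card : ℝ)
      ≤ ((S.biUnion (fun z => (univ : Finset V).filter (fun v => ¬ G.Adj z v))).card : ℝ) := by
        exact_mod_cast card_le_card hsub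
    _ ≤ ((∑ z ∈ S, ((univ : Finset V).filter (fun v => ¬ G.Adj z v)).card : ℕ) : ℝ) := by
        exact_mod_cast card_biUnion_le
    _ = ∑ z ∈ S, (((univ : Finset V).filter (fun v => ¬ G.Adj z v)).card : ℝ) := by
        push_cast; ring
    _ ≤ (S.card : ℝ) * (δ * (Fintype.card V : ℝ)) := by
        have := Finset.sum_le_card_nsmul S
          (fun z => (((univ : Finset V).filter (fun v => ¬ G.Adj z v)).card : ℝ))
          (δ * (Fintype.card V : ℝ)) (fun z _ => aux_nonadj_card G hmin z)
        simpa [nsmul_eq_mul] using this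

lemma aux_through (s : ℕ) (hs : 1 ≤ s) (v : V) :
    ((G.cliqueFinset s).filter (fun K => v ∈ K)).card ≤ (G.cliqueFinset (s-1)).card := by
  apply Finset.card_le_card_of_injOn (fun K => K.erase v)
  · intro K hK
    simp only [mem_coe, mem_filter, SimpleGraph.mem_cliqueFinset_iff] at *
    obtain ⟨⟨hc, hcard⟩, hv⟩ := hK
    exact ⟨hc.subset (by exact_mod_cast Finset.erase_subset v K), by
      rw [Finset.card_erase_of_mem hv, hcard]⟩
  · intro K hK K' hK' h
    simp only [coe_filter, Set.mem_setOf_eq, SimpleGraph.mem_cliqueFinset_iff] at hK hK'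
    simp only [] at h; rw [← Finset.insert_erase hK.2, ← Finset.insert_erase hK'.2, h]



lemma aux_count (s : ℕ) (hs : 1 ≤ s) {δ : ℝ}
    (hmin : (1-δ) * (Fintype.card V : ℝ) ≤ (G.minDegree : ℝ)) :
    ((G.cliqueFinset (s-1)).card : ℝ)
        * ((Fintype.card V : ℝ) - ((s:ℝ)-1) * (δ * (Fintype.card V : ℝ)))
      ≤ (s : ℝ) * ((G.cliqueFinset s).card : ℝ) := by
  classical
  set P : Finset (Finset V × V) :=
    ((G.cliqueFinset (s-1)) ×ˢ (univ : Finset V)).filter (fun p => ∀ z ∈ p.1, G.Adj z p.2)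
    with hP
  -- upper bound : P.card ≤ s * k_s
  have hup : P.card ≤ s * (G.cliqueFinset s).card := by
    have himg : P.image (fun p => insert p.2 p.1) ⊆ G.cliqueFinset s := by
      intro L hL
      simp only [mem_image] at hL
      obtain ⟨p, hp, rfl⟩ := hL
      simp only [hP, mem_filter, mem_product, mem_univ, and_true,
        SimpleGraph.mem_cliqueFinset_iff] at hp ⊢
      obtain ⟨⟨hc, hcard⟩, hadj⟩ := hp
      have hnot : p.2 ∉ p.1 := fun hmem => G.irrefl (hadj p.2 hmem)
      constructor
      · intro a ha b hb hab
        simp only [coe_insert, Set.mem_insert_iff, mem_coe] at ha hb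
        rcases ha with rfl | ha <;> rcases hb with rfl | hb
        · exact absurd rfl hab
        · exact (hadj b hb).symm
        · exact hadj a ha
        · exact hc ha hb hab
      · rw [Finset.card_insert_of_notMem hnot, hcard]; omega
    have hfib : ∀ L ∈ P.image (fun p => insert p.2 p.1),
        (P.filter (fun p => insert p.2 p.1 = L)).card ≤ s := by
      intro L hL
      have hLs : L.card = s := by
        have := himg hL
        exact (SimpleGraph.mem_cliqueFinset_iff.1 this).2
      rw [← hLs]
      apply Finset.card_le_card_of_injOn (fun p => p.2)
      · intro p hp
        simp only [mem_coe, mem_filter] at hp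
        rw [← hp.2]; exact mem_insert_self _ _
      · intro p hp q hq hpq
        simp only [coe_filter, Set.mem_setOf_eq, hP, mem_filter, mem_product] at hp hq
        obtain ⟨⟨⟨_, _⟩, hadjp⟩, heqp⟩ := hp
        obtain ⟨⟨⟨_, _⟩, hadjq⟩, heqq⟩ := hq
        have hnp : p.2 ∉ p.1 := fun hmem => G.irrefl (hadjp p.2 hmem)
        have hnq : q.2 ∉ q.1 := fun hmem => G.irrefl (hadjq q.2 hmem)
        simp only [] at hpq
        have h1 : p.1 = q.1 := by
          have h2 : (insert p.2 p.1).erase p.2 = (insert q.2 q.1).erase q.2 := by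
            rw [heqp, heqq, hpq]
          rwa [Finset.erase_insert hnp, Finset.erase_insert hnq] at h2
        exact Prod.ext h1 hpq
    calc P.card ≤ s * (P.image (fun p => insert p.2 p.1)).card :=
          Finset.card_le_mul_card_image _ s hfib
      _ ≤ s * (G.cliqueFinset s).card := by
          exact Nat.mul_le_mul_left s (card_le_card himg)
  -- lower bound : k_{s-1} * (n - (s-1) δ n) ≤ P.card
  have hlow : ((G.cliqueFinset (s-1)).card : ℝ)
      * ((Fintype.card V : ℝ) - ((s:ℝ)-1) * (δ * (Fintype.card V : ℝ)))
      ≤ (P.card : ℝ) := by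
    have hfibw : P.card = ∑ K ∈ G.cliqueFinset (s-1),
        (P.filter (fun p => p.1 = K)).card := by
      apply Finset.card_eq_sum_card_fiberwise
      intro p hp
      simp only [mem_coe, hP, mem_filter, mem_product] at hp
      exact hp.1.1
    have hfibK : ∀ K ∈ G.cliqueFinset (s-1),
        ((Fintype.card V : ℝ) - ((s:ℝ)-1) * (δ * (Fintype.card V : ℝ)))
          ≤ ((P.filter (fun p => p.1 = K)).card : ℝ) := by
      intro K hK
      have hKcard : K.card = s - 1 := (SimpleGraph.mem_cliqueFinset_iff.1 hK).2
      have heq : P.filter (fun p => p.1 = K)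
          = ((univ : Finset V).filter (fun v => ∀ z ∈ K, G.Adj z v)).image
              (fun v => (K, v)) := by
        ext p
        simp only [hP, mem_filter, mem_product, mem_image, mem_univ, true_and]
        constructor
        · rintro ⟨⟨⟨_, _⟩, hadj⟩, rfl⟩
          exact ⟨p.2, by simpa using hadj, rfl⟩
        · rintro ⟨v, hv, rfl⟩
          exact ⟨⟨⟨hK, trivial⟩, by simpa using hv⟩, rfl⟩
      have hinj : ((((univ : Finset V).filter (fun v => ∀ z ∈ K, G.Adj z v)).image
          (fun v => (K, v))).card)
          = (((univ : Finset V).filter (fun v => ∀ z ∈ K, G.Adj z v)).card) :=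
        Finset.card_image_of_injective _ (fun a b h => by simpa using h)
      rw [heq, hinj]
      -- commNbr card ≥ n - (s-1) δ n
      have hsplit := Finset.card_filter_add_card_filter_not
        (s := (univ : Finset V)) (p := fun v => ∀ z ∈ K, G.Adj z v)
      rw [card_univ] at hsplit
      have hbad := aux_bad_card G hmin K
      rw [hKcard] at hbad
      have hcast : (((s-1 : ℕ)) : ℝ) = (s : ℝ) - 1 := by
        push_cast [Nat.cast_sub hs]; ring
      rw [hcast] at hbad
      have hsplit' : (((univ : Finset V).filter (fun v => ∀ z ∈ K, G.Adj z v)).card : ℝ)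
          + (((univ : Finset V).filter (fun v => ¬ ∀ z ∈ K, G.Adj z v)).card : ℝ)
          = (Fintype.card V : ℝ) := by exact_mod_cast hsplit
      linarith
    calc ((G.cliqueFinset (s-1)).card : ℝ)
        * ((Fintype.card V : ℝ) - ((s:ℝ)-1) * (δ * (Fintype.card V : ℝ)))
        ≤ ∑ K ∈ G.cliqueFinset (s-1), ((P.filter (fun p => p.1 = K)).card : ℝ) := by
          have := Finset.card_nsmul_le_sum (G.cliqueFinset (s-1))
            (fun K => ((P.filter (fun p => p.1 = K)).card : ℝ))
            ((Fintype.card V : ℝ) - ((s:ℝ)-1) * (δ * (Fintype.card V : ℝ))) hfibK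
          simpa [nsmul_eq_mul] using this
      _ = (P.card : ℝ) := by rw [hfibw]; push_cast; ring
  have hup' : (P.card : ℝ) ≤ (s : ℝ) * ((G.cliqueFinset s).card : ℝ) := by
    exact_mod_cast hup
  linarith

end aux

/-- Lemma 4.2(i): the number of r-cliques containing a fixed t-clique Z is
close to the number of (r-t)-cliques. -/

theorem stmt_4 {V : Type*} [Fintype V] [DecidableEq V]
    (r t : ℕ) (δ : ℝ) (G : SimpleGraph V) [DecidableRel G.Adj]
    (hδ : δ ≤ 1/(2*(r:ℝ)))
    (hmin : (1-δ) * (Fintype.card V : ℝ) ≤ (G.minDegree : ℝ))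
    (ht0 : 0 < t) (htr : t < r) (Z : Finset V) (hZ : Z.card = t)
    (hZc : G.IsClique (Z : Set V)) :
    |(((G.cliqueFinset r).filter (fun K => Z ⊆ K)).card : ℝ)
        - ((G.cliqueFinset (r-t)).card : ℝ)|
      ≤ 2*(t:ℝ)*δ*(r:ℝ) * ((G.cliqueFinset (r-t)).card : ℝ) := by
  classical
  set n := Fintype.card V with hn
  set s := r - t with hsdef
  have hs : 1 ≤ s := by omega
  have hst : s + t = r := by omega
  -- nonempty V, δ > 0
  obtain ⟨z0, hz0⟩ : ∃ z, z ∈ Z := Finset.card_pos.1 (by omega) |>.imp (fun z h => h)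
  have hn0 : 0 < n := Fintype.card_pos_iff.2 ⟨z0⟩
  have hδ0 : 0 < δ := by
    have h1 : (G.minDegree : ℝ) ≤ (G.degree z0 : ℝ) := by
      exact_mod_cast G.minDegree_le_degree z0
    have h2 : (G.degree z0 : ℝ) < (n : ℝ) := by
      exact_mod_cast G.degree_lt_card_verts z0
    have h3 : (0:ℝ) < n := by exact_mod_cast hn0
    nlinarith
  set NB : Finset V := (univ : Finset V).filter (fun v => ∀ z ∈ Z, G.Adj z v) with hNB
  set A : Finset (Finset V) := (G.cliqueFinset r).filter (fun K => Z ⊆ K) with hA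
  set B : Finset (Finset V) := (G.cliqueFinset s).filter (fun K => K ⊆ NB) with hB
  set Bad : Finset (Finset V) := (G.cliqueFinset s).filter (fun K => ¬ K ⊆ NB) with hBad
  have hZNB : ∀ v ∈ NB, v ∉ Z := by
    intro v hv hvZ
    simp only [hNB, mem_filter, mem_univ, true_and] at hv
    exact G.irrefl (hv v hvZ)
  -- Step A : A.card = B.card
  have hAB : A.card = B.card := by
    apply Finset.card_bij (fun K _ => K \ Z)
    · intro K hK
      simp only [hA, mem_filter, SimpleGraph.mem_cliqueFinset_iff] at hK
      obtain ⟨⟨hc, hcard⟩, hZK⟩ := hK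
      simp only [hB, mem_filter, SimpleGraph.mem_cliqueFinset_iff]
      refine ⟨⟨hc.subset (by exact_mod_cast Finset.sdiff_subset), ?_⟩, ?_⟩
      · rw [Finset.card_sdiff_of_subset hZK, hcard, hZ]
      · intro v hv
        simp only [mem_sdiff] at hv
        simp only [hNB, mem_filter, mem_univ, true_and]
        intro z hz
        exact hc (hZK hz) (hv.1) (fun h => hv.2 (h ▸ hz))
    · intro K₁ h₁ K₂ h₂ heq
      simp only [hA, mem_filter] at h₁ h₂
      rw [← Finset.sdiff_union_of_subset h₁.2, ← Finset.sdiff_union_of_subset h₂.2, heq]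
    · intro L hL
      simp only [hB, mem_filter, SimpleGraph.mem_cliqueFinset_iff] at hL
      obtain ⟨⟨hc, hcard⟩, hLN⟩ := hL
      have hdisj : ∀ v ∈ L, v ∉ Z := fun v hv => hZNB v (hLN hv)
      have hadj : ∀ v ∈ L, ∀ z ∈ Z, G.Adj z v := by
        intro v hv
        have := hLN hv
        simp only [hNB, mem_filter, mem_univ, true_and] at this
        exact this
      refine ⟨L ∪ Z, ?_, ?_⟩
      · simp only [hA, mem_filter, SimpleGraph.mem_cliqueFinset_iff]
        refine ⟨⟨?_, ?_⟩, Finset.subset_union_right⟩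
        · intro a ha b hb hab
          simp only [coe_union, Set.mem_union, mem_coe] at ha hb
          rcases ha with ha | ha <;> rcases hb with hb | hb
          · exact hc ha hb hab
          · exact (hadj a ha b hb).symm
          · exact hadj b hb a ha
          · exact hZc ha hb hab
        · rw [Finset.card_union_of_disjoint (Finset.disjoint_left.2 hdisj), hcard, hZ, hst]
      · rw [Finset.union_sdiff_right, Finset.sdiff_eq_self_iff_disjoint.2
          (Finset.disjoint_left.2 hdisj)]
  -- partition
  have hpart : (G.cliqueFinset s).card = B.card + Bad.card :=
    (Finset.card_filter_add_card_filter_not (p := fun K => K ⊆ NB)).symm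
  -- Bad bound
  set NBbad : Finset V := (univ : Finset V).filter (fun v => ¬ ∀ z ∈ Z, G.Adj z v)
    with hNBbad
  have hBadsub : Bad ⊆ NBbad.biUnion (fun v => (G.cliqueFinset s).filter (fun K => v ∈ K)) := by
    intro K hK
    simp only [hBad, mem_filter] at hK
    obtain ⟨hKs, hKn⟩ := hK
    obtain ⟨v, hvK, hvN⟩ := Finset.not_subset.1 hKn
    refine mem_biUnion.2 ⟨v, ?_, by simp [mem_filter, hKs, hvK]⟩
    simp only [hNBbad, mem_filter, mem_univ, true_and]
    intro h
    exact hvN (mem_filter.2 ⟨mem_univ v, h⟩)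
  have hBadcard : (Bad.card : ℝ) ≤ (NBbad.card : ℝ) * ((G.cliqueFinset (s-1)).card : ℝ) := by
    calc (Bad.card : ℝ)
        ≤ ((NBbad.biUnion (fun v => (G.cliqueFinset s).filter (fun K => v ∈ K))).card : ℝ) := by
          exact_mod_cast card_le_card hBadsub
      _ ≤ ((∑ v ∈ NBbad, ((G.cliqueFinset s).filter (fun K => v ∈ K)).card : ℕ) : ℝ) := by
          exact_mod_cast card_biUnion_le
      _ ≤ ((NBbad.card * (G.cliqueFinset (s-1)).card : ℕ) : ℝ) := by
          have h := Finset.sum_le_card_nsmul NBbad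
            (fun v => ((G.cliqueFinset s).filter (fun K => v ∈ K)).card)
            ((G.cliqueFinset (s-1)).card) (fun v _ => aux_through G s hs v)
          rw [smul_eq_mul] at h
          exact_mod_cast h
      _ = (NBbad.card : ℝ) * ((G.cliqueFinset (s-1)).card : ℝ) := by push_cast; ring
  have hNBbadcard : (NBbad.card : ℝ) ≤ (t : ℝ) * (δ * (n : ℝ)) := by
    have := aux_bad_card G hmin Z
    rwa [hZ] at this
  -- counting : n * k_{s-1} ≤ 2 r k_s
  have hC := aux_count G s hs hmin
  have hnR : (0:ℝ) < (n : ℝ) := by exact_mod_cast hn0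
  have hrR : (0:ℝ) < (r : ℝ) := by exact_mod_cast (by omega : 0 < r)
  have hsr : (s : ℝ) ≤ (r : ℝ) := by exact_mod_cast (by omega : s ≤ r)
  have hs1 : (1:ℝ) ≤ (s:ℝ) := by exact_mod_cast hs
  have khalf : ((s:ℝ)-1) * (δ * (n : ℝ)) ≤ (1/2) * (n : ℝ) := by
    have h1 : ((s:ℝ)-1) * δ ≤ ((s:ℝ)-1) * (1/(2*(r:ℝ))) := by
      apply mul_le_mul_of_nonneg_left hδ (by linarith)
    have h2 : ((s:ℝ)-1) * (1/(2*(r:ℝ))) ≤ 1/2 := by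
      rw [mul_one_div, div_le_div_iff₀ (by linarith) (by norm_num : (0:ℝ) < 2)]
      nlinarith
    nlinarith
  have hks1 : (0:ℝ) ≤ ((G.cliqueFinset (s-1)).card : ℝ) := by positivity
  have hkey : (n : ℝ) * ((G.cliqueFinset (s-1)).card : ℝ)
      ≤ 2 * (r : ℝ) * ((G.cliqueFinset s).card : ℝ) := by
    have h1 : ((G.cliqueFinset (s-1)).card : ℝ) * ((1/2) * (n:ℝ))
        ≤ (s : ℝ) * ((G.cliqueFinset s).card : ℝ) := by
      refine le_trans ?_ hC
      apply mul_le_mul_of_nonneg_left _ hks1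
      linarith
    have hks : (0:ℝ) ≤ ((G.cliqueFinset s).card : ℝ) := by positivity
    have h2 : (s:ℝ) * ((G.cliqueFinset s).card : ℝ) ≤ (r:ℝ) * ((G.cliqueFinset s).card : ℝ) :=
      mul_le_mul_of_nonneg_right hsr hks
    linarith
  -- assemble
  have hAcast : ((A.card : ℝ)) - ((G.cliqueFinset s).card : ℝ) = -(Bad.card : ℝ) := by
    rw [hAB, hpart]; push_cast; ring
  have hgoal : |((A.card : ℝ)) - ((G.cliqueFinset s).card : ℝ)|
      ≤ 2*(t:ℝ)*δ*(r:ℝ) * ((G.cliqueFinset s).card : ℝ) := by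
    rw [hAcast, abs_neg, abs_of_nonneg (by positivity)]
    have htR : (0:ℝ) ≤ (t:ℝ) := by positivity
    calc (Bad.card : ℝ) ≤ (NBbad.card : ℝ) * ((G.cliqueFinset (s-1)).card : ℝ) := hBadcard
      _ ≤ ((t : ℝ) * (δ * (n : ℝ))) * ((G.cliqueFinset (s-1)).card : ℝ) := by
          apply mul_le_mul_of_nonneg_right hNBbadcard hks1
      _ = (t : ℝ) * δ * ((n : ℝ) * ((G.cliqueFinset (s-1)).card : ℝ)) := by ring
      _ ≤ (t : ℝ) * δ * (2 * (r : ℝ) * ((G.cliqueFinset s).card : ℝ)) := by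
          apply mul_le_mul_of_nonneg_left hkey (by positivity)
      _ = 2*(t:ℝ)*δ*(r:ℝ) * ((G.cliqueFinset s).card : ℝ) := by ring
  exact hgoal
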